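/- If G is a graph and S₀ is a stable set of minimum cardinality among all stable sets S with |S| > |N(S)| (such a set existing), then S₀ is contained in every maximum stable set of G; equivalently S₀ ⊆ core(G). -/
import Mathlib


open Finset

variable {V : Type*} [Fintype V] [DecidableEq V]

/-  A set of vertices is stable (independent) if no two of its vertices are adjacent. -/
def stable (G : SimpleGraph V) (S : Finset V) : Prop :=
  ∀ a ∈ S, ∀ b ∈ S, ¬ G.Adj a b

/-  The (open) neighborhood of a set of vertices. -/
open Classical in
noncomputable def nbhd (G : SimpleGraph V) (A : Finset V) : Finset V :=
  Finset.univ.filter fun v => ∃ a ∈ A, G.Adj a v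

/-  The stability number: maximum size of a stable set. -/
open Classical in
noncomputable def alpha (G : SimpleGraph V) : ℕ :=
  Finset.univ.sup fun S : Finset V => if stable G S then S.card else 0

/-  A maximum stable set. -/
def maxStable (G : SimpleGraph V) (S : Finset V) : Prop :=
  stable G S ∧ S.card = alpha G

/-  core(G): the intersection of all maximum stable sets. -/
open Classical in
noncomputable def core (G : SimpleGraph V) : Finset V :=
  Finset.univ.filter fun v => ∀ S : Finset V, maxStable G S → v ∈ S

/-  A vertex is isolated if it has no neighbors. -/
def isolated (G : SimpleGraph V) (v : V) : Prop := ∀ w, ¬ G.Adj v w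

/-  The set of isolated vertices. -/
open Classical in
noncomputable def isol (G : SimpleGraph V) : Finset V :=
  Finset.univ.filter fun v => isolated G v

/-  A minimum-cardinality stable set S₀ with |S₀| > |N(S₀)| is contained in core(G). -/
theorem stmt1 (G : SimpleGraph V)
    (S₀ : Finset V) (hs : stable G S₀) (hgt : (nbhd G S₀).card < S₀.card)
    (hmin : ∀ S : Finset V, stable G S → (nbhd G S).card < S.card → S₀.card ≤ S.card) :
    S₀ ⊆ core G := by
  classical
  intro v hv
  simp only [core, mem_filter, mem_univ, true_and]
  intro A hA
  suffices h : S₀ ⊆ A from h hv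
  obtain ⟨hAst, hAcard⟩ := hA
  set N := nbhd G S₀ with hN
  -- the modified set is stable
  have hA' : stable G ((A \ N) ∪ S₀) := by
    intro a ha b hb hadj
    rcases mem_union.1 ha with ha | ha
    · rcases mem_union.1 hb with hb | hb
      · exact hAst a (mem_sdiff.1 ha).1 b (mem_sdiff.1 hb).1 hadj
      · refine (mem_sdiff.1 ha).2 ?_
        simp only [hN, nbhd, mem_filter, mem_univ, true_and]
        exact ⟨b, hb, hadj.symm⟩
    · rcases mem_union.1 hb with hb | hb
      · refine (mem_sdiff.1 hb).2 ?_
        simp only [hN, nbhd, mem_filter, mem_univ, true_and]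
        exact ⟨a, ha, hadj⟩
      · exact hs a ha b hb hadj
  have hle : ((A \ N) ∪ S₀).card ≤ A.card := by
    have h1 := Finset.le_sup (f := fun S : Finset V => if stable G S then S.card else 0)
      (mem_univ ((A \ N) ∪ S₀))
    rw [hAcard]
    simpa [hA', alpha] using h1
  have key1 : (S₀ \ A).card ≤ (A ∩ N).card := by
    have hd : Disjoint (A \ N) (S₀ \ A) := by
      rw [Finset.disjoint_left]
      intro x hx hx2
      exact (mem_sdiff.1 hx2).2 (mem_sdiff.1 hx).1
    have hsub : (A \ N) ∪ (S₀ \ A) ⊆ (A \ N) ∪ S₀ :=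
      union_subset_union_right (sdiff_subset)
    have h2 : (A \ N).card + (S₀ \ A).card ≤ ((A \ N) ∪ S₀).card := by
      rw [← Finset.card_union_of_disjoint hd]
      exact card_le_card hsub
    have h3 : (A ∩ N).card + (A \ N).card = A.card := Finset.card_inter_add_card_sdiff A N
    omega
  have hdisj : Disjoint (nbhd G (S₀ ∩ A)) (A ∩ N) := by
    rw [Finset.disjoint_left]
    intro x hx1 hx2
    simp only [nbhd, mem_filter, mem_univ, true_and] at hx1
    obtain ⟨s, hs1, hadj⟩ := hx1
    exact hAst s (mem_inter.1 hs1).2 x (mem_inter.1 hx2).1 hadj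
  have hsub2 : (nbhd G (S₀ ∩ A)) ∪ (A ∩ N) ⊆ N := by
    intro x hx
    rcases mem_union.1 hx with hx | hx
    · rw [hN]
      simp only [nbhd, mem_filter, mem_univ, true_and] at hx ⊢
      obtain ⟨s, hs1, hadj⟩ := hx
      exact ⟨s, (mem_inter.1 hs1).1, hadj⟩
    · exact (mem_inter.1 hx).2
  have h4 : (nbhd G (S₀ ∩ A)).card + (A ∩ N).card ≤ N.card := by
    rw [← Finset.card_union_of_disjoint hdisj]
    exact card_le_card hsub2
  have h5 : (S₀ ∩ A).card + (S₀ \ A).card = S₀.card := Finset.card_inter_add_card_sdiff S₀ A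
  have h6 : (nbhd G (S₀ ∩ A)).card < (S₀ ∩ A).card := by omega
  have h7 : stable G (S₀ ∩ A) := fun a ha b hb =>
    hs a (mem_inter.1 ha).1 b (mem_inter.1 hb).1
  have h8 := hmin _ h7 h6
  have h9 : S₀ ∩ A = S₀ :=
    Finset.eq_of_subset_of_card_le inter_subset_left h8
  exact Finset.inter_eq_left.1 h9
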